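/- Let W ∈ ℝ^{n×n} be symmetric positive definite, let S = [s_1 ⋯ s_m] ∈ ℝ^{n×m} have linearly independent columns, let Y = [y_1 ⋯ y_m] ∈ ℝ^{n×m} satisfy s_i^T y_i > 0 for all i ∈ {1,…,m}, and let (s_0, y_0) ∈ ℝⁿ × ℝⁿ satisfy ρ_0 := 1/(s_0^T y_0) > 0 and s_0 = S τ for some τ ∈ ℝ^m. Then there exist A ∈ ℝ^{m×(m−1)} and b ∈ ℝ^{m−1} such that the matrix Ỹ := W^{−1} S [A 0] + y_0 [b^T 0] + Y (where [A 0] ∈ ℝ^{m×m} appends a zero column to A and [b^T 0] ∈ ℝ^{1×m} appends a zero entry to b^T) satisfies all of the following, with χ_0 := 1 + ρ_0 y_0^T W y_0: (a) s_i^T ỹ_j = s_i^T y_j for all 1 ≤ i ≤ j ≤ m, i.e., R̃ = R; (b) the vector in ℝ^m obtained by appending a zero entry to b equals −ρ_0 (S^T Y − R)^T τ; (c) (Ỹ − Y)^T W (Ỹ − Y) = (χ_0/ρ_0) [b;0][b;0]^T − [A 0]^T (S^T Y − R) − (S^T Y − R)^T [A 0], where [b;0] ∈ ℝ^m appends a zero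 entry to b. -/

import Mathlib

open Matrix


section vmv
variable {k l p : Type*} [Fintype k] [Fintype l] [Fintype p]

lemma my_mul_vecMulVec (M : Matrix k l ℝ) (a : l → ℝ) (b : p → ℝ) :
    M * vecMulVec a b = vecMulVec (M *ᵥ a) b := by
  ext i j
  simp only [Matrix.mul_apply, vecMulVec_apply, mulVec, dotProduct, Finset.sum_mul]
  exact Finset.sum_congr rfl fun x _ => by ring

lemma my_vecMulVec_mul (a : k → ℝ) (b : l → ℝ) (M : Matrix l p ℝ) :
    vecMulVec a b * M = vecMulVec a (Mᵀ *ᵥ b) := by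
  ext i j
  simp only [Matrix.mul_apply, vecMulVec_apply, mulVec, transpose_apply, dotProduct,
    Finset.mul_sum]
  exact Finset.sum_congr rfl fun x _ => by ring

lemma my_vecMulVec_mul_vecMulVec (a : k → ℝ) (b c : l → ℝ) (d : p → ℝ) :
    vecMulVec a b * vecMulVec c d = (b ⬝ᵥ c) • vecMulVec a d := by
  ext i j
  simp only [Matrix.mul_apply, vecMulVec_apply, Matrix.smul_apply, dotProduct, Finset.sum_mul,
    smul_eq_mul, Finset.mul_sum]
  exact Finset.sum_congr rfl fun x _ => by ring

lemma my_vecMulVec_transpose (a : k → ℝ) (b : l → ℝ) :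
    (vecMulVec a b)ᵀ = vecMulVec b a := by
  ext i j; simp [vecMulVec_apply, mul_comm]

lemma my_vecMulVec_mulVec (a : k → ℝ) (b : l → ℝ) (x : l → ℝ) :
    vecMulVec a b *ᵥ x = (b ⬝ᵥ x) • a := by
  ext i
  simp only [mulVec, vecMulVec_apply, dotProduct, Pi.smul_apply, smul_eq_mul, Finset.sum_mul]
  exact Finset.sum_congr rfl fun x _ => by ring

lemma my_vecMulVec_smul (a : k → ℝ) (c : ℝ) (b : l → ℝ) :
    vecMulVec a (c • b) = c • vecMulVec a b := by
  ext i j; simp [vecMulVec_apply]; ring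

omit [Fintype k] [Fintype l] in
lemma my_vecMulVec_smul' {c : ℝ} (a : k → ℝ) (b : l → ℝ) :
    Matrix.vecMulVec (c • a) b = c • Matrix.vecMulVec a b := by
  ext i j; simp [Matrix.vecMulVec_apply]; ring

end vmv

set_option maxHeartbeats 1000000

lemma my_posDef_submatrix {m : ℕ} {A : Matrix (Fin m) (Fin m) ℝ} (hA : A.PosDef)
    (e : Fin m ≃ Fin m) : (A.submatrix e e).PosDef := by
  refine Matrix.PosDef.of_dotProduct_mulVec_pos (hA.1.submatrix e) (fun x hx => ?_)
  have hx' : (x ∘ e.symm) ≠ 0 := by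
    intro h
    apply hx
    funext i
    have := congrFun h (e i)
    simpa using this
  have key := hA.dotProduct_mulVec_pos hx'
  rw [show (⇑e : Fin m → Fin m) = ⇑e from rfl]
  rw [submatrix_mulVec_equiv]
  calc star x ⬝ᵥ ((A *ᵥ (x ∘ e.symm)) ∘ e)
      = star (x ∘ e.symm) ⬝ᵥ (A *ᵥ (x ∘ e.symm)) := by
        simp only [dotProduct, Function.comp_apply, Pi.star_apply, star_trivial]
        exact Fintype.sum_equiv e (fun i => x i * (A *ᵥ (x ∘ ⇑e.symm)) (e i))
          (fun j => x (e.symm j) * (A *ᵥ (x ∘ ⇑e.symm)) j) (fun i => by simp)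
    _ > 0 := key

attribute [-instance] instDecidableEqFin in
lemma my_chol_lower {m : ℕ} (A : Matrix (Fin m) (Fin m) ℝ) (hA : A.PosDef) :
    ∃ C : Matrix (Fin m) (Fin m) ℝ, (∀ i j : Fin m, i < j → C i j = 0) ∧ Cᵀ * C = A := by
  obtain ⟨e, he1, he2⟩ : ∃ e : Fin m ≃ Fin m, (∀ x, e (e x) = x) ∧
      (∀ i j : Fin m, i < j → e j < e i) :=
    ⟨⟨Fin.rev, Fin.rev, Fin.rev_rev, Fin.rev_rev⟩, fun x => Fin.rev_rev x,
      fun i j h => Fin.rev_lt_rev.mpr h⟩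
  have hA' : (A.submatrix e e).PosDef := my_posDef_submatrix hA e
  have iW : WellFoundedLT (Fin m) := inferInstance
  have iL : LocallyFiniteOrderBot (Fin m) := inferInstance
  have pack : ∃ (LI D : Matrix (Fin m) (Fin m) ℝ),
      (∀ i j : Fin m, i < j → LI i j = 0) ∧ D.PosSemidef ∧ (∀ i j : Fin m, i ≠ j → D i j = 0) ∧
      LI⁻¹ * D * (LI⁻¹)ᵀ = A.submatrix e e := by
    refine ⟨@LDL.lowerInv ℝ _ (Fin m) _ iW iL _ _ hA', @LDL.diag ℝ _ (Fin m) _ iW iL _ _ hA',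
      fun i j h => @LDL.lowerInv_triangular ℝ _ (Fin m) _ iW iL _ _ hA' i j h, ?_, ?_, ?_⟩
    · rw [@LDL.diag_eq_lowerInv_conj ℝ _ (Fin m) _ iW iL _ _ hA']
      exact hA'.posSemidef.mul_mul_conjTranspose_same _
    · intro i j h
      rw [LDL.diag]
      exact Matrix.diagonal_apply_ne _ h
    · have h := @LDL.lower_conj_diag ℝ _ (Fin m) _ iW iL _ _ hA'
      rw [LDL.lower] at h
      rw [← conjTranspose_eq_transpose_of_trivial]
      exact h
  obtain ⟨LI, D, hLItri, hDpsd, hDoff, hfact⟩ := pack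
  -- LI is invertible
  have hdet : IsUnit LI.det := by
    rcases Nat.eq_zero_or_pos m with hm0 | hm0
    · subst hm0
      simp [Matrix.det_isEmpty]
    · haveI : Nonempty (Fin m) := ⟨⟨0, hm0⟩⟩
      by_contra hcon
      have hz : LI⁻¹ = 0 := Matrix.nonsing_inv_apply_not_isUnit _ hcon
      rw [hz] at hfact
      simp only [Matrix.zero_mul, Matrix.transpose_zero, Matrix.mul_zero] at hfact
      have h2 := hA'.det_pos
      rw [← hfact, Matrix.det_zero] at h2
      exact lt_irrefl _ h2
  haveI : Invertible LI := LI.invertibleOfIsUnitDet hdet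
  set L := LI⁻¹ with hLdef
  have hLinvTri : LI.BlockTriangular (OrderDual.toDual : Fin m → (Fin m)ᵒᵈ) := fun i j hij =>
    hLItri _ _ hij
  have hLTri : L.BlockTriangular (OrderDual.toDual : Fin m → (Fin m)ᵒᵈ) :=
    blockTriangular_inv_of_blockTriangular hLinvTri
  have hDnn : ∀ i, 0 ≤ D i i := by
    intro i
    have h := hDpsd.dotProduct_mulVec_nonneg (Pi.single i 1)
    simpa [Matrix.mulVec_single, single_dotProduct] using h
  set sq : Matrix (Fin m) (Fin m) ℝ := Matrix.diagonal (fun i => Real.sqrt (D i i)) with hsq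
  have hsqsq : sq * sq = D := by
    rw [hsq, diagonal_mul_diagonal]
    ext i j
    by_cases h : i = j
    · subst h
      simp [Real.mul_self_sqrt (hDnn i)]
    · rw [Matrix.diagonal_apply_ne _ h, hDoff i j h]
  set Lo := L * sq with hLo
  have hLofact : Lo * Loᵀ = A.submatrix ⇑e ⇑e := by
    have hsqT : sqᵀ = sq := diagonal_transpose _
    have h1 : Lo * Loᵀ = L * (sq * sq) * Lᵀ := by
      rw [hLo, transpose_mul, hsqT]
      noncomm_ring
    rw [h1, hsqsq, hfact]
  have hLoTri : ∀ i j : Fin m, i < j → Lo i j = 0 := by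
    intro i j hij
    rw [hLo, mul_diagonal]
    have : L i j = 0 := hLTri (show OrderDual.toDual j < OrderDual.toDual i from hij)
    rw [this, zero_mul]
  refine ⟨(Lo.submatrix ⇑e ⇑e)ᵀ, ?_, ?_⟩
  · intro i j hij
    simp only [transpose_apply, submatrix_apply]
    exact hLoTri _ _ (he2 _ _ hij)
  · rw [transpose_transpose, transpose_submatrix,
      ← submatrix_mul _ _ _ _ _ e.bijective, hLofact]
    ext i j
    show A (e (e i)) (e (e j)) = A i j
    rw [he1, he1]

lemma my_exists_lower_T {m : ℕ} {P G : Matrix (Fin m) (Fin m) ℝ} (hP : P.PosDef)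
    (hG : G.PosDef) :
    ∃ T : Matrix (Fin m) (Fin m) ℝ, (∀ i j : Fin m, i < j → T i j = 0) ∧ Tᵀ * P * T = G := by
  classical
  obtain ⟨CP, hCPl, hCPf⟩ := my_chol_lower P hP
  obtain ⟨CG, hCGl, hCGf⟩ := my_chol_lower G hG
  have hdet : IsUnit CP.det := by
    have h2 : CP.det * CP.det = P.det := by
      rw [← hCPf, det_mul, det_transpose]
    have : CP.det ≠ 0 := by
      intro h
      rw [h, mul_zero] at h2
      exact hP.det_pos.ne' h2.symm
    exact this.isUnit
  haveI : Invertible CP := CP.invertibleOfIsUnitDet hdet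
  have hCPTri : CP.BlockTriangular (OrderDual.toDual : Fin m → (Fin m)ᵒᵈ) := fun i j h => hCPl _ _ h
  have hCPinvTri := blockTriangular_inv_of_blockTriangular hCPTri
  refine ⟨CP⁻¹ * CG, ?_, ?_⟩
  · intro i j hij
    exact (hCPinvTri.mul (fun i j h => hCGl _ _ h)) (show OrderDual.toDual j < OrderDual.toDual i from hij)
  · rw [transpose_mul, ← hCPf, ← hCGf]
    have h1 : CP * CP⁻¹ = 1 := mul_nonsing_inv _ hdet
    have h2 : (CP⁻¹)ᵀ * CPᵀ = 1 := by
      rw [← transpose_mul, h1, transpose_one]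
    calc CGᵀ * (CP⁻¹)ᵀ * (CPᵀ * CP) * (CP⁻¹ * CG)
        = CGᵀ * (((CP⁻¹)ᵀ * CPᵀ) * ((CP * CP⁻¹) * CG)) := by noncomm_ring
      _ = CGᵀ * CG := by rw [h1, h2, one_mul, one_mul]


lemma my_star_trivial {k : Type*} (v : k → ℝ) : star v = v :=
  funext fun _ => star_trivial _


theorem agg_bfgs_key_equations_solvable (n m : ℕ) (hm : 1 ≤ m)
    (W : Matrix (Fin n) (Fin n) ℝ) (hW : W.PosDef)
    (S Y : Matrix (Fin n) (Fin m) ℝ)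
    (hS : LinearIndependent ℝ (fun j : Fin m => fun i : Fin n => S i j))
    (hpos : ∀ i : Fin m, 0 < (Sᵀ * Y) i i)
    (s0 y0 : Fin n → ℝ) (h0 : 0 < s0 ⬝ᵥ y0)
    (τ : Fin m → ℝ) (hs0 : s0 = S *ᵥ τ) :
    ∃ (A : Matrix (Fin m) (Fin (m - 1)) ℝ) (b : Fin (m - 1) → ℝ),
      -- ρ₀ and χ₀
      let ρ0 : ℝ := 1 / (s0 ⬝ᵥ y0)
      let χ0 : ℝ := 1 + ρ0 * (y0 ⬝ᵥ (W *ᵥ y0))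
      -- [A 0] ∈ ℝ^{m×m}: A with a zero column appended
      let A0 : Matrix (Fin m) (Fin m) ℝ :=
        Matrix.of fun i j => if h : (j : ℕ) < m - 1 then A i ⟨(j : ℕ), h⟩ else 0
      -- [b; 0] ∈ ℝ^m: b with a zero entry appended
      let b0 : Fin m → ℝ := fun j => if h : (j : ℕ) < m - 1 then b ⟨(j : ℕ), h⟩ else 0
      -- Ỹ := W⁻¹ S [A 0] + y₀ [bᵀ 0] + Y
      let Yt : Matrix (Fin n) (Fin m) ℝ := W⁻¹ * S * A0 + Matrix.vecMulVec y0 b0 + Y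
      -- R and R̃
      let R : Matrix (Fin m) (Fin m) ℝ :=
        Matrix.of fun i j => if i ≤ j then (Sᵀ * Y) i j else 0
      let Rt : Matrix (Fin m) (Fin m) ℝ :=
        Matrix.of fun i j => if i ≤ j then (Sᵀ * Yt) i j else 0
      -- (a) R̃ = R
      Rt = R ∧
      -- (b) [b; 0] = −ρ₀ (Sᵀ Y − R)ᵀ τ
      b0 = (-ρ0) • ((Sᵀ * Y - R)ᵀ *ᵥ τ) ∧
      -- (c) (Ỹ − Y)ᵀ W (Ỹ − Y) = (χ₀/ρ₀)[b;0][b;0]ᵀ − [A 0]ᵀ(SᵀY − R) − (SᵀY − R)ᵀ[A 0]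
      (Yt - Y)ᵀ * W * (Yt - Y) =
        (χ0 / ρ0) • Matrix.vecMulVec b0 b0
          - A0ᵀ * (Sᵀ * Y - R) - (Sᵀ * Y - R)ᵀ * A0 := by
  -- basic facts about W
  have hWdet : IsUnit W.det := hW.det_pos.ne'.isUnit
  have hWiW : W⁻¹ * W = 1 := Matrix.nonsing_inv_mul W hWdet
  have hWWi : W * W⁻¹ = 1 := Matrix.mul_nonsing_inv W hWdet
  have hWt : Wᵀ = W := by
    have h := hW.isHermitian
    rwa [Matrix.IsHermitian, conjTranspose_eq_transpose_of_trivial] at h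
  have hWit : (W⁻¹)ᵀ = W⁻¹ := by rw [Matrix.transpose_nonsing_inv, hWt]
  have hWcan1 : ∀ Z : Matrix (Fin n) (Fin m) ℝ, W⁻¹ * (W * Z) = Z := by
    intro Z; rw [← Matrix.mul_assoc, hWiW, Matrix.one_mul]
  have hWcan2 : ∀ Z : Matrix (Fin n) (Fin m) ℝ, W * (W⁻¹ * Z) = Z := by
    intro Z; rw [← Matrix.mul_assoc, hWWi, Matrix.one_mul]
  -- injectivity of S
  have hSinj : ∀ x : Fin m → ℝ, S *ᵥ x = 0 → x = 0 := by
    intro x hx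
    have h1 : ∑ j : Fin m, x j • (fun i : Fin n => S i j) = 0 := by
      funext i
      have h2 := congrFun hx i
      simp only [Matrix.mulVec, dotProduct, Pi.zero_apply] at h2
      simp only [Finset.sum_apply, Pi.smul_apply, smul_eq_mul, Pi.zero_apply]
      rw [← h2]
      exact Finset.sum_congr rfl fun j _ => mul_comm _ _
    have h3 := Fintype.linearIndependent_iff.mp hS x h1
    funext j; exact h3 j
  -- the matrix P
  obtain ⟨P, hPdef⟩ : ∃ P : Matrix (Fin m) (Fin m) ℝ, P = Sᵀ * W⁻¹ * S := ⟨_, rfl⟩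
  have hPt : Pᵀ = P := by
    rw [hPdef, transpose_mul, transpose_mul, transpose_transpose, hWit, Matrix.mul_assoc]
  have hPpd : P.PosDef := by
    rw [hPdef]
    refine Matrix.PosDef.of_dotProduct_mulVec_pos ?_ ?_
    · rw [Matrix.IsHermitian, conjTranspose_eq_transpose_of_trivial]
      rw [← hPdef, hPt]
    · intro x hx
      have hSx : S *ᵥ x ≠ 0 := fun hcon => hx (hSinj x hcon)
      have hkey := hW.inv.dotProduct_mulVec_pos hSx
      rw [my_star_trivial] at hkey
      rw [my_star_trivial, ← Matrix.mulVec_mulVec, ← Matrix.mulVec_mulVec,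
        Matrix.dotProduct_mulVec, Matrix.vecMul_transpose]
      exact hkey
  have hPdetu : IsUnit P.det := hPpd.det_pos.ne'.isUnit
  have hPi : P * P⁻¹ = 1 := Matrix.mul_nonsing_inv _ hPdetu
  have hPit : (P⁻¹)ᵀ = P⁻¹ := by rw [Matrix.transpose_nonsing_inv, hPt]
  have hPinv : (P⁻¹).PosDef := hPpd.inv
  -- scalars and vectors
  obtain ⟨ρ, hρ⟩ : ∃ ρ : ℝ, ρ = 1 / (s0 ⬝ᵥ y0) := ⟨_, rfl⟩
  have hρpos : 0 < ρ := by rw [hρ]; exact one_div_pos.mpr h0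
  have hρd : ρ * (s0 ⬝ᵥ y0) = 1 := by
    rw [hρ]; field_simp
  obtain ⟨u, hu⟩ : ∃ u : Fin m → ℝ, u = Sᵀ *ᵥ y0 := ⟨_, rfl⟩
  obtain ⟨Lm, hLm⟩ : ∃ Lm : Matrix (Fin m) (Fin m) ℝ,
      Lm = Sᵀ * Y - Matrix.of fun i j => if i ≤ j then (Sᵀ * Y) i j else 0 := ⟨_, rfl⟩
  have hLlow : ∀ i j : Fin m, i ≤ j → Lm i j = 0 := by
    intro i j h
    rw [hLm]
    simp [Matrix.sub_apply, h]
  obtain ⟨w, hw⟩ : ∃ w : Fin m → ℝ, w = Lmᵀ *ᵥ τ := ⟨_, rfl⟩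
  obtain ⟨b0v, hb0v⟩ : ∃ b0v : Fin m → ℝ, b0v = (-ρ) • w := ⟨_, rfl⟩
  have hwlast : ∀ j : Fin m, ¬((j : ℕ) < m - 1) → w j = 0 := by
    intro j hj
    rw [hw]
    simp only [Matrix.mulVec, dotProduct, Matrix.transpose_apply]
    apply Finset.sum_eq_zero
    intro i _
    have hij : i ≤ j := by
      have h1 := i.isLt
      have h2 := j.isLt
      rw [Fin.le_def]
      omega
    rw [hLlow i j hij, zero_mul]
  have hb0last : ∀ j : Fin m, ¬((j : ℕ) < m - 1) → b0v j = 0 := by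
    intro j hj
    rw [hb0v]
    simp [hwlast j hj]
  -- the matrices K and G
  obtain ⟨K, hK⟩ : ∃ K : Matrix (Fin m) (Fin m) ℝ,
      K = (1 : Matrix (Fin m) (Fin m) ℝ) - ρ • vecMulVec u τ := ⟨_, rfl⟩
  obtain ⟨G, hG⟩ : ∃ G : Matrix (Fin m) (Fin m) ℝ,
      G = Kᵀ * P⁻¹ * K + ρ • vecMulVec τ τ := ⟨_, rfl⟩
  have hGpd : G.PosDef := by
    rw [hG]
    refine Matrix.PosDef.of_dotProduct_mulVec_pos ?_ ?_
    · rw [Matrix.IsHermitian, conjTranspose_eq_transpose_of_trivial]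
      simp only [transpose_add, transpose_smul, transpose_mul, transpose_transpose, hPit,
        my_vecMulVec_transpose, Matrix.mul_assoc]
    · intro x hx
      rw [my_star_trivial]
      have hform : x ⬝ᵥ ((Kᵀ * P⁻¹ * K) *ᵥ x) = (K *ᵥ x) ⬝ᵥ (P⁻¹ *ᵥ (K *ᵥ x)) := by
        rw [← Matrix.mulVec_mulVec, ← Matrix.mulVec_mulVec, Matrix.dotProduct_mulVec,
          Matrix.vecMul_transpose]
      rw [Matrix.add_mulVec, Matrix.smul_mulVec, dotProduct_add, dotProduct_smul,
        my_vecMulVec_mulVec, hform]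
      by_cases hτx : τ ⬝ᵥ x = 0
      · have hKx : K *ᵥ x = x := by
          rw [hK, Matrix.sub_mulVec, Matrix.one_mulVec, Matrix.smul_mulVec,
            my_vecMulVec_mulVec, hτx]
          simp
        rw [hKx]
        have h2 : x ⬝ᵥ ((τ ⬝ᵥ x) • τ) = 0 := by rw [hτx]; simp
        rw [h2]
        simp only [smul_eq_mul, mul_zero, add_zero]
        have := hPinv.dotProduct_mulVec_pos hx
        rwa [my_star_trivial] at this
      · have h1 : 0 ≤ (K *ᵥ x) ⬝ᵥ (P⁻¹ *ᵥ (K *ᵥ x)) := by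
          have := hPinv.posSemidef.dotProduct_mulVec_nonneg (K *ᵥ x)
          rwa [my_star_trivial] at this
        have h2 : 0 < ρ • (x ⬝ᵥ ((τ ⬝ᵥ x) • τ)) := by
          rw [dotProduct_smul, smul_eq_mul, smul_eq_mul]
          have h3 : x ⬝ᵥ τ = τ ⬝ᵥ x := dotProduct_comm _ _
          rw [h3]
          exact mul_pos hρpos (mul_self_pos.mpr hτx)
        exact add_pos_of_nonneg_of_pos h1 h2
  -- T from the factorization lemma
  obtain ⟨T, hTlow, hTfact⟩ := my_exists_lower_T hPinv hGpd
  -- N, E, Afull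
  obtain ⟨N, hN⟩ : ∃ N : Matrix (Fin m) (Fin m) ℝ, N = T * Lm := ⟨_, rfl⟩
  have hNlow : ∀ i j : Fin m, i ≤ j → N i j = 0 := by
    intro i j h
    rw [hN, Matrix.mul_apply]
    apply Finset.sum_eq_zero
    intro k _
    by_cases hk : k ≤ j
    · rw [hLlow k j hk, mul_zero]
    · have : i < k := lt_of_le_of_lt h (lt_of_not_ge hk)
      rw [hTlow i k this, zero_mul]
  obtain ⟨E, hE⟩ : ∃ E : Matrix (Fin m) (Fin m) ℝ,
      E = N - Lm - vecMulVec u b0v := ⟨_, rfl⟩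
  obtain ⟨Afull, hAfull⟩ : ∃ Af : Matrix (Fin m) (Fin m) ℝ, Af = P⁻¹ * E := ⟨_, rfl⟩
  have hPAfull : P * Afull = E := by
    rw [hAfull, ← Matrix.mul_assoc, hPi, Matrix.one_mul]
  have hAfullT : Afullᵀ = Eᵀ * P⁻¹ := by rw [hAfull, transpose_mul, hPit]
  have hElast : ∀ (k j : Fin m), ¬((j : ℕ) < m - 1) → E k j = 0 := by
    intro k j hj
    have hkj : k ≤ j := by
      have h1 := k.isLt
      have h2 := j.isLt
      rw [Fin.le_def]
      omega
    rw [hE]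
    simp [Matrix.sub_apply, hNlow k j hkj, hLlow k j hkj, vecMulVec_apply, hb0last j hj]
  have hAflast : ∀ (i j : Fin m), ¬((j : ℕ) < m - 1) → Afull i j = 0 := by
    intro i j hj
    rw [hAfull, Matrix.mul_apply]
    apply Finset.sum_eq_zero
    intro k _
    rw [hElast k j hj, mul_zero]
  -- products with S
  have hSV : Sᵀ * vecMulVec y0 b0v = vecMulVec u b0v := by
    rw [my_mul_vecMulVec, ← hu]
  have hSYt : Sᵀ * (W⁻¹ * S * Afull + vecMulVec y0 b0v + Y) = Sᵀ * Y + (N - Lm) := by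
    rw [Matrix.mul_add, Matrix.mul_add, hSV]
    simp only [← Matrix.mul_assoc]
    rw [← hPdef, hPAfull, hE]
    abel
  -- the four expansion terms
  have t1 : (W⁻¹ * S * Afull)ᵀ * W * (W⁻¹ * S * Afull) = Eᵀ * (P⁻¹ * E) := by
    have h1 : (W⁻¹ * S * Afull)ᵀ * W * (W⁻¹ * S * Afull)
        = Afullᵀ * (Sᵀ * (W⁻¹ * (W * (W⁻¹ * (S * Afull))))) := by
      simp only [transpose_mul, transpose_transpose, hWit, Matrix.mul_assoc]
    rw [h1, hWcan1]
    have h2 : Sᵀ * (W⁻¹ * (S * Afull)) = E := by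
      simp only [← Matrix.mul_assoc]
      rw [← hPdef]
      exact hPAfull
    rw [h2, hAfullT, Matrix.mul_assoc]
  have t2 : (W⁻¹ * S * Afull)ᵀ * W * vecMulVec y0 b0v = Eᵀ * (P⁻¹ * vecMulVec u b0v) := by
    have h1 : (W⁻¹ * S * Afull)ᵀ * W * vecMulVec y0 b0v
        = Afullᵀ * (Sᵀ * (W⁻¹ * (W * vecMulVec y0 b0v))) := by
      simp only [transpose_mul, transpose_transpose, hWit, Matrix.mul_assoc]
    rw [h1, hWcan1, hSV, hAfullT, Matrix.mul_assoc]
  have t3 : (vecMulVec y0 b0v)ᵀ * W * (W⁻¹ * S * Afull) = vecMulVec b0v u * (P⁻¹ * E) := by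
    have h1 : (vecMulVec y0 b0v)ᵀ * W * (W⁻¹ * S * Afull)
        = vecMulVec b0v y0 * (W * (W⁻¹ * (S * Afull))) := by
      simp only [my_vecMulVec_transpose, Matrix.mul_assoc]
    rw [h1, hWcan2, my_vecMulVec_mul, transpose_mul, ← Matrix.mulVec_mulVec, ← hu,
      ← my_vecMulVec_mul, hAfull]
  have t4 : (vecMulVec y0 b0v)ᵀ * W * vecMulVec y0 b0v
      = (y0 ⬝ᵥ (W *ᵥ y0)) • vecMulVec b0v b0v := by
    have h1 : (vecMulVec y0 b0v)ᵀ * W * vecMulVec y0 b0v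
        = vecMulVec b0v y0 * (W * vecMulVec y0 b0v) := by
      simp only [my_vecMulVec_transpose, Matrix.mul_assoc]
    rw [h1, my_mul_vecMulVec, my_vecMulVec_mul_vecMulVec]
  -- key algebraic identities
  have hF : Lm + vecMulVec u b0v = K * Lm := by
    rw [hK, Matrix.sub_mul, Matrix.one_mul, Matrix.smul_mul, my_vecMulVec_mul, ← hw, hb0v,
      my_vecMulVec_smul, neg_smul]
    abel
  have hNN : Nᵀ * (P⁻¹ * N) = Lmᵀ * ((Kᵀ * P⁻¹ * K) * Lm) + ρ • vecMulVec w w := by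
    have h1 : Nᵀ * (P⁻¹ * N) = Lmᵀ * ((Tᵀ * P⁻¹ * T) * Lm) := by
      rw [hN]
      simp only [transpose_mul, Matrix.mul_assoc]
    rw [h1, hTfact, hG]
    simp only [Matrix.add_mul, Matrix.mul_add, Matrix.smul_mul, Matrix.mul_smul,
      my_vecMulVec_mul, my_mul_vecMulVec, ← hw]
  have hFF : (K * Lm)ᵀ * (P⁻¹ * (K * Lm)) = Lmᵀ * ((Kᵀ * P⁻¹ * K) * Lm) := by
    simp only [transpose_mul, Matrix.mul_assoc]
  have hE' : E = N - (Lm + vecMulVec u b0v) := by rw [hE]; abel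
  have hNE : N = E + (Lm + vecMulVec u b0v) := by rw [hE']; abel
  have hFt : (Lm + vecMulVec u b0v)ᵀ = Lmᵀ + vecMulVec b0v u := by
    rw [transpose_add, my_vecMulVec_transpose]
  have hBvv : vecMulVec b0v b0v = (ρ * ρ) • vecMulVec w w := by
    rw [hb0v, my_vecMulVec_smul', my_vecMulVec_smul, smul_smul, neg_mul_neg]
  have key : Eᵀ * (P⁻¹ * N) + (Lmᵀ + vecMulVec b0v u) * (P⁻¹ * E)
      = (s0 ⬝ᵥ y0) • vecMulVec b0v b0v := by
    rw [← hFt]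
    conv_lhs => rw [hE']
    have hstep : (N - (Lm + vecMulVec u b0v))ᵀ * (P⁻¹ * N)
        + (Lm + vecMulVec u b0v)ᵀ * (P⁻¹ * (N - (Lm + vecMulVec u b0v)))
        = Nᵀ * (P⁻¹ * N) - (Lm + vecMulVec u b0v)ᵀ * (P⁻¹ * (Lm + vecMulVec u b0v)) := by
      simp only [Matrix.transpose_sub, Matrix.sub_mul, Matrix.mul_sub]
      abel
    rw [hstep, hNN, hF, hFF, hBvv, smul_smul]
    have hcoef : (s0 ⬝ᵥ y0) * (ρ * ρ) = ρ := by
      calc (s0 ⬝ᵥ y0) * (ρ * ρ) = (ρ * (s0 ⬝ᵥ y0)) * ρ := by ring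
        _ = 1 * ρ := by rw [hρd]
        _ = ρ := one_mul ρ
    rw [hcoef]
    abel
  have key2 : Eᵀ * (P⁻¹ * E) + Eᵀ * (P⁻¹ * Lm) + Eᵀ * (P⁻¹ * vecMulVec u b0v)
      + Lmᵀ * (P⁻¹ * E) + vecMulVec b0v u * (P⁻¹ * E)
      = (s0 ⬝ᵥ y0) • vecMulVec b0v b0v := by
    rw [← key]
    conv_rhs => rw [hNE]
    simp only [Matrix.mul_add, Matrix.add_mul]
    abel
  -- abbreviation equalities for the chosen A and b
  have hA0eq : (Matrix.of fun (i j : Fin m) => if h : (j : ℕ) < m - 1 then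
      (Matrix.of fun (i : Fin m) (k : Fin (m - 1)) =>
        Afull i (Fin.castLE (Nat.sub_le m 1) k)) i ⟨(j : ℕ), h⟩ else 0)
      = Afull := by
    ext i j
    by_cases h : (j : ℕ) < m - 1
    · rw [Matrix.of_apply, dif_pos h]
      rfl
    · rw [Matrix.of_apply, dif_neg h]
      exact (hAflast i j h).symm
  have hb0eq : (fun j : Fin m => if h : (j : ℕ) < m - 1 then
      b0v (Fin.castLE (Nat.sub_le m 1) (⟨(j : ℕ), h⟩ : Fin (m - 1))) else 0) = b0v := by
    funext j
    by_cases h : (j : ℕ) < m - 1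
    · rw [dif_pos h]
      rfl
    · rw [dif_neg h]
      exact (hb0last j h).symm
  -- the candidate A and b
  refine ⟨Matrix.of fun (i : Fin m) (k : Fin (m - 1)) => Afull i (Fin.castLE (Nat.sub_le m 1) k),
    fun (k : Fin (m - 1)) => b0v (Fin.castLE (Nat.sub_le m 1) k), ?_, ?_, ?_⟩
  -- (a)
  · simp only [hA0eq, hb0eq, hSYt]
    ext i j
    simp only [Matrix.of_apply]
    by_cases h : i ≤ j
    · rw [if_pos h, if_pos h, Matrix.add_apply, Matrix.sub_apply, hNlow i j h, hLlow i j h]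
      simp
    · rw [if_neg h, if_neg h]
  -- (b)
  · rw [hb0eq, hb0v, hw, hρ, ← hLm]
  -- (c)
  · simp only [hA0eq, hb0eq]
    rw [add_sub_cancel_right]
    simp only [← hLm]
    have hd0 : s0 ⬝ᵥ y0 ≠ 0 := h0.ne'
    have hscal : (1 + 1 / (s0 ⬝ᵥ y0) * (y0 ⬝ᵥ (W *ᵥ y0))) / (1 / (s0 ⬝ᵥ y0))
        = (s0 ⬝ᵥ y0) + (y0 ⬝ᵥ (W *ᵥ y0)) := by
      field_simp
    rw [hscal]
    have expand : ∀ X V : Matrix (Fin n) (Fin m) ℝ,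
        (X + V)ᵀ * W * (X + V) = Xᵀ * W * X + Xᵀ * W * V + Vᵀ * W * X + Vᵀ * W * V := by
      intro X V
      simp only [transpose_add, Matrix.add_mul, Matrix.mul_add]
      abel
    rw [expand, t1, t2, t3, t4, hAfullT, Matrix.mul_assoc Eᵀ P⁻¹ Lm, hAfull, add_smul, ← key2]
    abel
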